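/- Let M_s*(F) := (1-ν)ν_E β_E² k F (F̂ - F) / (γ_s δ_M (β_E F + k(ν_E + δ_E))²) for a fixed F̂ > 0. Then for all F ∈ [0, F̂], M_s*(F) ≥ (dM_s*/dF)(F) · F. -/

import Mathlib

noncomputable def Mstar (bE nE dE dM gs k nu Fhat : ℝ) (F : ℝ) : ℝ :=
  (1 - nu) * nE * bE ^ 2 * k * F * (Fhat - F) /
    (gs * dM * (bE * F + k * (nE + dE)) ^ 2)

theorem stmt_6 (bE nE dE dM gs k nu Fhat : ℝ)
    (hbE : 0 < bE) (hnE : 0 < nE) (hdE : 0 < dE) (hdM : 0 < dM)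
    (hgs : 0 < gs) (hk : 0 < k) (hnu : nu ∈ Set.Ioo (0:ℝ) 1) (hF : 0 < Fhat) :
    ∀ F ∈ Set.Icc (0:ℝ) Fhat,
      deriv (Mstar bE nE dE dM gs k nu Fhat) F * F ≤ Mstar bE nE dE dM gs k nu Fhat F := by
  intro F hFm
  obtain ⟨hF0, hFhi⟩ := hFm
  set c : ℝ := (1 - nu) * nE * bE ^ 2 * k with hc
  set a : ℝ := k * (nE + dE) with ha
  have hapos : 0 < a := by positivity
  have hD : 0 < bE * F + a := by positivity
  have hcpos : 0 < c := by
    have h1 : 0 < 1 - nu := by linarith [hnu.2]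
    positivity
  have hg : gs * dM * (bE * F + a) ^ 2 ≠ 0 := by positivity
  have hderiv : HasDerivAt (Mstar bE nE dE dM gs k nu Fhat)
      ((c * (Fhat - 2 * F) * (gs * dM * (bE * F + a) ^ 2) -
        c * F * (Fhat - F) * (gs * dM * (2 * (bE * F + a) * bE))) /
        (gs * dM * (bE * F + a) ^ 2) ^ 2) F := by
    have h1 : HasDerivAt (fun F : ℝ => c * F * (Fhat - F)) (c * (Fhat - 2 * F)) F := by
      have := ((hasDerivAt_id F).const_mul c).mul ((hasDerivAt_id F).const_sub Fhat)
      exact this.congr_deriv (by simp only [id_eq]; ring)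
    have h2 : HasDerivAt (fun F : ℝ => gs * dM * (bE * F + a) ^ 2)
        (gs * dM * (2 * (bE * F + a) * bE)) F := by
      have hb : HasDerivAt (fun F : ℝ => bE * F + a) bE F := by
        simpa using ((hasDerivAt_id F).const_mul bE).add_const a
      have := (hb.pow 2).const_mul (gs * dM)
      exact this.congr_deriv (by rw [show (2:ℕ) - 1 = 1 from rfl]; push_cast; ring)
    have := h1.div h2 hg
    exact this
  rw [hderiv.deriv]
  rw [Mstar, show bE * F + k * (nE + dE) = bE * F + a from rfl]
  rw [div_mul_eq_mul_div, div_le_div_iff₀ (by positivity) (by positivity)]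
  have key : 0 ≤ F ^ 2 * ((bE * F + a) + 2 * bE * (Fhat - F)) := by
    have : 0 ≤ Fhat - F := by linarith
    positivity
  have hid : (1 - nu) * nE * bE ^ 2 * k * F * (Fhat - F) * (gs * dM * (bE * F + a) ^ 2) ^ 2 -
      (c * (Fhat - 2 * F) * (gs * dM * (bE * F + a) ^ 2) -
        c * F * (Fhat - F) * (gs * dM * (2 * (bE * F + a) * bE))) * F *
        (gs * dM * (bE * F + a) ^ 2) =
      c * (gs * dM * (bE * F + a)) * (gs * dM * (bE * F + a) ^ 2) *
        (F ^ 2 * ((bE * F + a) + 2 * bE * (Fhat - F))) := by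
    rw [hc]; ring
  have hpos : 0 ≤ c * (gs * dM * (bE * F + a)) * (gs * dM * (bE * F + a) ^ 2) *
      (F ^ 2 * ((bE * F + a) + 2 * bE * (Fhat - F))) := by
    apply mul_nonneg _ key
    positivity
  linarith
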